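/- Let X be a compact metric space and A ⊆ X × X a compact relation. Then the closure of the transitive closure of A equals closure(⋃ₙ ∼ₙ(A)), where ∼ₙ(A) is the set of pairs connected by a chain of length n in A. Consequently, the map Γ : K(X×X) → K(X×X), Γ(A) = closure(A⁺ ∪ Δ_X), is Borel measurable. -/

import Mathlib

open TopologicalSpace

/-- Transitive closure of a relation. -/
def transClos {Z : Type*} (F : Set (Z × Z)) : Set (Z × Z) :=
  {p | Relation.TransGen (fun a b => (a, b) ∈ F) p.1 p.2}

/-- `∼ₙ(A)`: pairs joined by a chain of length `n` in `A`. -/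
def chainRel {X : Type*} (n : ℕ) (A : Set (X × X)) : Set (X × X) :=
  {p | ∃ f : ℕ → X, f 0 = p.1 ∧ f n = p.2 ∧ ∀ i < n, (f i, f (i + 1)) ∈ A}

open Metric Set Filter

section Helpers


lemma chainRel_zero {X : Type*} (A : Set (X × X)) :
    chainRel 0 A = {p : X × X | p.1 = p.2} := by
  ext ⟨a, b⟩
  constructor
  · rintro ⟨f, h0, hn, -⟩
    simp only [mem_setOf_eq] at h0 hn ⊢
    rw [← h0, ← hn]
  · rintro (h : a = b)
    exact ⟨fun _ => a, rfl, h, by omega⟩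

lemma chain_tail {X : Type*} {A : Set (X × X)} (n : ℕ) (f : ℕ → X)
    (hf : ∀ i < n + 1, (f i, f (i + 1)) ∈ A) :
    Relation.TransGen (fun a b => (a, b) ∈ A) (f 0) (f (n + 1)) := by
  induction n with
  | zero => exact Relation.TransGen.single (hf 0 (by omega))
  | succ m ih =>
      exact Relation.TransGen.tail (ih (fun i hi => hf i (by omega)))
        (hf (m + 1) (by omega))

lemma transClos_eq_iUnion {Z : Type*} (A : Set (Z × Z)) :
    transClos A = ⋃ n : ℕ, chainRel (n + 1) A := by
  ext ⟨a, b⟩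
  constructor
  · intro h
    simp only [transClos, mem_setOf_eq] at h
    induction h with
    | @single c h =>
        exact mem_iUnion.2 ⟨0, fun i => if i = 0 then a else c, by simp, by simp,
          by intro i hi; interval_cases i; simpa using h⟩
    | @tail c d hab hbc ih =>
        rcases mem_iUnion.1 ih with ⟨n, f, h0, hn, hch⟩
        refine mem_iUnion.2 ⟨n + 1, fun i => if i ≤ n + 1 then f i else d, ?_, ?_, ?_⟩
        · simpa using h0
        · simp
        · intro i hi
          rcases Nat.lt_or_ge i (n + 1) with h | h
          · simpa [Nat.le_of_lt h, Nat.succ_le_of_lt h] using hch i h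
          · have : i = n + 1 := by omega
            subst this
            simpa [hn] using hbc
  · intro h
    rcases mem_iUnion.1 h with ⟨n, f, h0, hn, hch⟩
    have := chain_tail n f hch
    rw [h0, hn] at this
    exact this

lemma mem_limit {Y : Type*} [MetricSpace Y] {B : ℕ → NonemptyCompacts Y}
    {L : NonemptyCompacts Y} (hB : Tendsto B atTop (nhds L)) {x : ℕ → Y} {l : Y}
    (hx : ∀ j, x j ∈ (B j : Set Y)) (hl : Tendsto x atTop (nhds l)) : l ∈ (L : Set Y) := by
  rw [(L.isCompact.isClosed).mem_iff_infDist_zero L.nonempty]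
  refine le_antisymm ?_ infDist_nonneg
  have key : ∀ j, infDist l (L : Set Y) ≤ dist l (x j) + dist (B j) L := by
    intro j
    calc infDist l (L : Set Y) ≤ infDist (x j) (L : Set Y) + dist l (x j) :=
          infDist_le_infDist_add_dist
      _ = dist l (x j) + infDist (x j) (L : Set Y) := add_comm _ _
      _ ≤ dist l (x j) + dist (B j) L := by
          gcongr
          rw [Metric.NonemptyCompacts.dist_eq]
          exact infDist_le_hausdorffDist_of_mem (hx j)
            (hausdorffEdist_ne_top_of_nonempty_of_bounded (B j).nonempty L.nonempty
              (B j).isCompact.isBounded L.isCompact.isBounded)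
  have h0 : Tendsto (fun j => dist l (x j) + dist (B j) L) atTop (nhds 0) := by
    have h1 : Tendsto (fun j => dist l (x j)) atTop (nhds 0) :=
      tendsto_iff_dist_tendsto_zero.1 hl |>.congr (fun j => dist_comm _ _)
    have h2 : Tendsto (fun j => dist (B j) L) atTop (nhds 0) :=
      tendsto_iff_dist_tendsto_zero.1 hB
    simpa using h1.add h2
  exact ge_of_tendsto h0 (Eventually.of_forall key)

variable {X : Type*} [MetricSpace X] [CompactSpace X]

lemma closed_hit (n : ℕ) {C : Set (X × X)} (hC : IsClosed C) :
    IsClosed {A : NonemptyCompacts (X × X) | ∃ p ∈ chainRel n (A : Set (X × X)), p ∈ C} := by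
  apply IsSeqClosed.isClosed
  intro B L hB hBL
  choose p hp hpC using hB
  choose f hf0 hfn hfch using hp
  -- sequence of chains in the compact space `Fin (n+1) → X`
  obtain ⟨g, φ, hφ, hg⟩ := CompactSpace.tendsto_subseq
    (fun j => (fun i : Fin (n + 1) => f j i) : ℕ → Fin (n + 1) → X)
  have hcoord : ∀ i : Fin (n + 1), Tendsto (fun j => f (φ j) (i : ℕ)) atTop (nhds (g i)) :=
    fun i => (tendsto_pi_nhds.1 hg) i
  set F : ℕ → X := fun i => if h : i < n + 1 then g ⟨i, h⟩ else g ⟨0, Nat.succ_pos n⟩ with hF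
  have hFcoord : ∀ i (h : i < n + 1), Tendsto (fun j => f (φ j) i) atTop (nhds (F i)) := by
    intro i h
    have hc := hcoord ⟨i, h⟩
    simp only [hF, dif_pos h]
    exact hc
  refine ⟨(F 0, F n), ⟨F, rfl, rfl, ?_⟩, ?_⟩
  · intro i hi
    refine mem_limit (hB := hBL.comp hφ.tendsto_atTop) (x := fun j => (f (φ j) i, f (φ j) (i+1)))
      (fun j => hfch (φ j) i hi) ?_
    exact (hFcoord i (by omega)).prodMk_nhds (hFcoord (i+1) (by omega))
  · have : Tendsto (fun j => p (φ j)) atTop (nhds (F 0, F n)) := by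
      have := (hFcoord 0 (by omega)).prodMk_nhds (hFcoord n (by omega))
      exact this.congr fun j => Prod.ext (hf0 (φ j)) (hfn (φ j))
    exact hC.mem_of_tendsto this (Eventually.of_forall fun j => hpC (φ j))

variable [Nonempty X]

/-- `U A`: all chain relations including the diagonal (`n = 0`). -/
def UU (A : NonemptyCompacts (X × X)) : Set (X × X) :=
  ⋃ n : ℕ, chainRel n (A : Set (X × X))

lemma UU_nonempty (A : NonemptyCompacts (X × X)) : (UU A).Nonempty := by
  obtain ⟨x⟩ := ‹Nonempty X›
  exact ⟨(x, x), mem_iUnion.2 ⟨0, by rw [chainRel_zero]; rfl⟩⟩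

lemma union_eq_UU (A : NonemptyCompacts (X × X)) :
    transClos (A : Set (X × X)) ∪ {p : X × X | p.1 = p.2} = UU A := by
  rw [transClos_eq_iUnion, ← chainRel_zero (A : Set (X × X))]
  ext p
  simp only [UU, mem_union, mem_iUnion]
  constructor
  · rintro (⟨n, h⟩ | h)
    exacts [⟨n + 1, h⟩, ⟨0, h⟩]
  · rintro ⟨n, h⟩
    cases n with
    | zero => exact Or.inr h
    | succ m => exact Or.inl ⟨m, h⟩

variable [MeasurableSpace (NonemptyCompacts (X × X))] [BorelSpace (NonemptyCompacts (X × X))]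

lemma meas_hit (n : ℕ) {C : Set (X × X)} (hC : IsClosed C) :
    MeasurableSet {A : NonemptyCompacts (X × X) | ∃ p ∈ chainRel n (A : Set (X × X)), p ∈ C} :=
  (closed_hit n hC).measurableSet

lemma bounded_all (s : Set (X × X)) : Bornology.IsBounded s :=
  (isCompact_univ.isBounded).subset (subset_univ _)

lemma meas_le (K₀ : NonemptyCompacts (X × X)) (q : ℝ) (hq : 0 ≤ q) :
    MeasurableSet {A : NonemptyCompacts (X × X) | hausdorffDist (UU A) (K₀ : Set (X × X)) ≤ q} := by
  set K : Set (X × X) := (K₀ : Set (X × X)) with hK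
  have hfin : ∀ A : NonemptyCompacts (X × X), EMetric.hausdorffEdist (UU A) K ≠ ⊤ := fun A =>
    hausdorffEdist_ne_top_of_nonempty_of_bounded (UU_nonempty A) K₀.nonempty
      (bounded_all _) (bounded_all _)
  -- part 1
  have h1 : MeasurableSet {A : NonemptyCompacts (X × X) | ∀ p ∈ UU A, infDist p K ≤ q} := by
    have : {A : NonemptyCompacts (X × X) | ∀ p ∈ UU A, infDist p K ≤ q} =
        ⋂ n : ℕ, (⋃ k : ℕ, {A : NonemptyCompacts (X × X) |
          ∃ p ∈ chainRel n (A : Set (X × X)), p ∈ {x | q + 1 / (k + 1) ≤ infDist x K}})ᶜ := by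
      ext A
      constructor
      · intro h
        refine mem_iInter.2 fun n => ?_
        intro hmem
        rcases mem_iUnion.1 hmem with ⟨k, hk⟩
        rcases hk with ⟨p, hp, hle⟩
        have h2 : infDist p K ≤ q := h p (mem_iUnion.2 ⟨n, hp⟩)
        have h3 : (0 : ℝ) < 1 / (k + 1) := by positivity
        have h4 : q + 1 / (k + 1 : ℝ) ≤ infDist p K := hle
        linarith
      · intro h p hp
        rcases mem_iUnion.1 hp with ⟨n, hpn⟩
        by_contra hlt
        push_neg at hlt
        obtain ⟨k, hk⟩ := exists_nat_one_div_lt (sub_pos.2 hlt)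
        exact mem_iInter.1 h n (mem_iUnion.2 ⟨k, ⟨p, hpn, by
          show q + 1 / (k + 1 : ℝ) ≤ infDist p K
          linarith⟩⟩)
    rw [this]
    exact MeasurableSet.iInter fun n => (MeasurableSet.iUnion fun k =>
      meas_hit n (isClosed_le continuous_const (continuous_infDist_pt K))).compl
  -- part 2
  have hQ : ∀ y : X × X, MeasurableSet {A : NonemptyCompacts (X × X) | infDist y (UU A) ≤ q} := by
    intro y
    have : {A : NonemptyCompacts (X × X) | infDist y (UU A) ≤ q} =
        ⋂ k : ℕ, ⋃ n : ℕ, ⋃ m : ℕ, {A : NonemptyCompacts (X × X) |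
          ∃ p ∈ chainRel n (A : Set (X × X)),
            p ∈ {z | dist y z ≤ q + 1 / (k + 1) - 1 / (m + 1)}} := by
      ext A
      simp only [mem_iInter, mem_iUnion, mem_setOf_eq]
      constructor
      · intro h k
        have hk : (0 : ℝ) < 1 / (k + 1) := by positivity
        have hlt : infDist y (UU A) < q + 1 / (k + 1) := by linarith
        obtain ⟨p, hpU, hd⟩ := (infDist_lt_iff (UU_nonempty A)).1 hlt
        rcases mem_iUnion.1 hpU with ⟨n, hpn⟩
        obtain ⟨m, hm⟩ := exists_nat_one_div_lt (sub_pos.2 hd)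
        exact ⟨n, m, p, hpn, by linarith⟩
      · intro h
        by_contra hq'
        push_neg at hq'
        obtain ⟨k, hk⟩ := exists_nat_one_div_lt (sub_pos.2 hq')
        obtain ⟨n, m, p, hpn, hd⟩ := h k
        have hle : infDist y (UU A) ≤ dist y p :=
          infDist_le_dist_of_mem (mem_iUnion.2 ⟨n, hpn⟩)
        have hm : (0 : ℝ) < 1 / (m + 1) := by positivity
        linarith
    rw [this]
    refine MeasurableSet.iInter fun k => MeasurableSet.iUnion fun n =>
      MeasurableSet.iUnion fun m => meas_hit n ?_
    exact isClosed_le (continuous_const.dist continuous_id) continuous_const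
  have h2 : MeasurableSet {A : NonemptyCompacts (X × X) | ∀ y ∈ K, infDist y (UU A) ≤ q} := by
    obtain ⟨s, hsc, hsd⟩ := TopologicalSpace.exists_countable_dense (↥K)
    set c : Set (X × X) := Subtype.val '' s with hc
    have hc_sub : c ⊆ K := by rintro _ ⟨⟨z, hz⟩, -, rfl⟩; exact hz
    have hc_count : c.Countable := (hsc.image _)
    have hK_clos : K ⊆ closure c := Subtype.dense_iff.1 hsd
    have : {A : NonemptyCompacts (X × X) | ∀ y ∈ K, infDist y (UU A) ≤ q} =
        ⋂ y ∈ c, {A : NonemptyCompacts (X × X) | infDist y (UU A) ≤ q} := by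
      ext A
      simp only [mem_iInter, mem_setOf_eq]
      constructor
      · exact fun h y hy => h y (hc_sub hy)
      · intro h y hy
        have hsub : K ⊆ {z : X × X | infDist z (UU A) ≤ q} := by
          refine hK_clos.trans (closure_minimal (fun z hz => h z hz) ?_)
          exact isClosed_le (continuous_infDist_pt _) continuous_const
        exact hsub hy
    rw [this]
    exact MeasurableSet.biInter hc_count fun y _ => hQ y
  -- combine
  have : {A : NonemptyCompacts (X × X) | hausdorffDist (UU A) K ≤ q} =
      {A : NonemptyCompacts (X × X) | ∀ p ∈ UU A, infDist p K ≤ q} ∩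
        {A : NonemptyCompacts (X × X) | ∀ y ∈ K, infDist y (UU A) ≤ q} := by
    ext A
    simp only [mem_inter_iff, mem_setOf_eq]
    constructor
    · intro h
      refine ⟨fun p hp => (infDist_le_hausdorffDist_of_mem hp (hfin A)).trans h,
        fun y hy => ?_⟩
      have hfin' : EMetric.hausdorffEdist K (UU A) ≠ ⊤ := by
        rw [show EMetric.hausdorffEdist K (UU A) = EMetric.hausdorffEdist (UU A) K from
          EMetric.hausdorffEdist_comm]; exact hfin A
      have h5 := infDist_le_hausdorffDist_of_mem hy hfin'
      rw [hausdorffDist_comm] at h5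
      exact h5.trans h
    · rintro ⟨ha, hb⟩
      exact hausdorffDist_le_of_infDist hq ha hb
  rw [this]
  exact h1.inter h2

lemma meas_ball (K₀ : NonemptyCompacts (X × X)) (r : ℝ) :
    MeasurableSet {A : NonemptyCompacts (X × X) | hausdorffDist (UU A) (K₀ : Set (X × X)) < r} := by
  have : {A : NonemptyCompacts (X × X) | hausdorffDist (UU A) (K₀ : Set (X × X)) < r} =
      ⋃ q : ℚ, ⋃ (_ : 0 ≤ (q : ℝ) ∧ (q : ℝ) < r),
        {A : NonemptyCompacts (X × X) | hausdorffDist (UU A) (K₀ : Set (X × X)) ≤ (q : ℝ)} := by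
    ext A
    simp only [mem_iUnion, mem_setOf_eq]
    constructor
    · intro h
      obtain ⟨q, hq1, hq2⟩ := exists_rat_btwn h
      exact ⟨q, ⟨hausdorffDist_nonneg.trans hq1.le, hq2⟩, hq1.le⟩
    · rintro ⟨q, ⟨-, hqr⟩, hle⟩
      exact lt_of_le_of_lt hle hqr
  rw [this]
  exact MeasurableSet.iUnion fun q => MeasurableSet.iUnion fun hq => meas_le K₀ q hq.1

lemma meas_gamma :
    Measurable (fun A : NonemptyCompacts (X × X) =>
      (⟨⟨closure (transClos (A : Set (X × X)) ∪ {p : X × X | p.1 = p.2}),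
          IsClosed.isCompact isClosed_closure⟩,
        ⟨(Classical.arbitrary X, Classical.arbitrary X),
          subset_closure (Or.inr rfl)⟩⟩ : NonemptyCompacts (X × X))) := by
  set Γ := fun A : NonemptyCompacts (X × X) =>
      (⟨⟨closure (transClos (A : Set (X × X)) ∪ {p : X × X | p.1 = p.2}),
          IsClosed.isCompact isClosed_closure⟩,
        ⟨(Classical.arbitrary X, Classical.arbitrary X),
          subset_closure (Or.inr rfl)⟩⟩ : NonemptyCompacts (X × X)) with hΓ
  have key : ∀ (d : NonemptyCompacts (X × X)) (t : ℝ),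
      Γ ⁻¹' (ball d t) = {A | hausdorffDist (UU A) (d : Set (X × X)) < t} := by
    intro d t
    ext A
    simp only [mem_preimage, mem_ball, mem_setOf_eq, hΓ]
    rw [Metric.NonemptyCompacts.dist_eq]
    show hausdorffDist (closure (transClos (A : Set (X × X)) ∪ {p : X × X | p.1 = p.2}))
        (d : Set (X × X)) < t ↔ _
    rw [hausdorffDist_closure₁, union_eq_UU]
  apply measurable_of_isOpen
  intro V hV
  obtain ⟨D, hDc, hDd⟩ := TopologicalSpace.exists_countable_dense (NonemptyCompacts (X × X))
  have hVeq : Γ ⁻¹' V =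
      ⋃ d ∈ D, ⋃ q : ℚ, ⋃ (_ : ball d (q : ℝ) ⊆ V), Γ ⁻¹' ball d (q : ℝ) := by
    ext A
    simp only [mem_preimage, mem_iUnion, exists_prop]
    constructor
    · intro hAV
      obtain ⟨ε, hε, hball⟩ := Metric.isOpen_iff.1 hV (Γ A) hAV
      obtain ⟨d, hd⟩ := Metric.dense_iff.1 hDd (Γ A) (ε / 3) (by positivity)
      have hd1 : dist d (Γ A) < ε / 3 := mem_ball.1 hd.1
      obtain ⟨q, hq1, hq2⟩ := exists_rat_btwn (show ε / 3 < 2 * ε / 3 by linarith)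
      refine ⟨d, hd.2, q, fun z hz => hball ?_, ?_⟩
      · have hz' : dist z d < (q : ℝ) := mem_ball.1 hz
        have htr : dist z (Γ A) ≤ dist z d + dist d (Γ A) := dist_triangle _ _ _
        exact mem_ball.2 (by linarith)
      · have : dist (Γ A) d < (q : ℝ) := by rw [dist_comm]; linarith
        exact mem_ball.2 this
    · rintro ⟨d, hdD, q, hsub, hmem⟩
      exact hsub hmem
  rw [hVeq]
  refine MeasurableSet.biUnion hDc fun d _ => MeasurableSet.iUnion fun q =>
    MeasurableSet.iUnion fun _ => ?_
  rw [key]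
  exact meas_ball d q

end Helpers

/-- The closure of the transitive closure of a compact relation `A` equals
`closure (⋃ₙ ∼ₙ(A))`, and consequently the map `Γ(A) = closure (A⁺ ∪ Δ_X)` is Borel
measurable on the hyperspace `K(X × X)`. -/
theorem stmt12 {X : Type*} [MetricSpace X] [CompactSpace X] [Nonempty X]
    [MeasurableSpace (NonemptyCompacts (X × X))] [BorelSpace (NonemptyCompacts (X × X))] :
    (∀ A : Set (X × X), IsCompact A →
        closure (transClos A) = closure (⋃ n : ℕ, chainRel (n + 1) A)) ∧
      Measurable (fun A : NonemptyCompacts (X × X) =>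
        (⟨⟨closure (transClos (A : Set (X × X)) ∪ {p : X × X | p.1 = p.2}),
            IsClosed.isCompact isClosed_closure⟩,
          ⟨(Classical.arbitrary X, Classical.arbitrary X),
            subset_closure (Or.inr rfl)⟩⟩ : NonemptyCompacts (X × X))) := by
  exact ⟨fun A _ => by rw [transClos_eq_iUnion], meas_gamma⟩
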